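/- arXiv:1408.3317 — 2 statements merged into one kernel-verified Lean document; each statement's English description precedes it below -/
import Mathlib

section
/- Controllability of the synthesis result (Theorem pbis): if S^n_{k,f} is complete, then S^n_{k,f} ≼≈ k, i.e., the synthesis result is related to the original plant by partial bisimulation. -/
/-- A Kripke structure with labeled transitions (Kripke-LTS). -/
structure KLTS (P E : Type) where
  X : Type
  L : X → Set P
  T : X → E → X → Prop
  init : X

/-- State-based (Boolean) formulas. -/
inductive BF (P : Type) where
  | tt : BF P
  | ff : BF P
  | atom : P → BF P
  | neg : BF P → BF P
  | and : BF P → BF P → BF P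
  | or : BF P → BF P → BF P

/-- Satisfaction of a state-based formula by a label set. -/
def BSat {P : Type} (A : Set P) : BF P → Prop
  | .tt => True
  | .ff => False
  | .atom p => p ∈ A
  | .neg b => ¬ BSat A b
  | .and b c => BSat A b ∧ BSat A c
  | .or b c => BSat A b ∨ BSat A c

/-- The modal requirement logic F. -/
inductive F (P E : Type) where
  | base : BF P → F P E
  | and : F P E → F P E → F P E
  | or : BF P → F P E → F P E
  | box : E → F P E → F P E
  | dia : E → F P E → F P E
  | inv : F P E → F P E
  | reach : BF P → F P E
  | dlf : F P E

variable {P E : Type}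

/-- Reachability (reflexive-transitive closure, ignoring event labels). -/
def KLTS.Star (k : KLTS P E) : k.X → k.X → Prop :=
  Relation.ReflTransGen (fun a b => ∃ e, k.T a e b)

/-- Validity of a modal formula at a Kripke-LTS. -/
def FSat : KLTS P E → F P E → Prop
  | k, .base b => BSat (k.L k.init) b
  | k, .and f g => FSat k f ∧ FSat k g
  | k, .or b f => BSat (k.L k.init) b ∨ FSat k f
  | k, .box e f => ∀ x', k.T k.init e x' → FSat ⟨k.X, k.L, k.T, x'⟩ f
  | k, .dia e f => ∃ x', k.T k.init e x' ∧ FSat ⟨k.X, k.L, k.T, x'⟩ f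
  | k, .inv f => ∀ x', k.Star k.init x' → FSat ⟨k.X, k.L, k.T, x'⟩ f
  | k, .reach b => ∃ x', k.Star k.init x' ∧ BSat (k.L x') b
  | k, .dlf => ∃ e x', k.T k.init e x'

/-- R is a simulation relation between k' and k. -/
def SimRel (k' k : KLTS P E) (R : k'.X → k.X → Prop) : Prop :=
  ∀ y' y, R y' y → k'.L y' = k.L y ∧
    ∀ e z', k'.T y' e z' → ∃ z, k.T y e z ∧ R z' z

/-- Simulation preorder. -/
def Sim (k' k : KLTS P E) : Prop :=
  ∃ R : k'.X → k.X → Prop, R k'.init k.init ∧ SimRel k' k R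

/-- R is a partial bisimulation relation (w.r.t. uncontrollable events U). -/
def PBisRel (U : Set E) (k' k : KLTS P E) (R : k'.X → k.X → Prop) : Prop :=
  ∀ y' y, R y' y → k'.L y' = k.L y ∧
    (∀ e z', k'.T y' e z' → ∃ z, k.T y e z ∧ R z' z) ∧
    (∀ e z, e ∈ U → k.T y e z → ∃ z', k'.T y' e z' ∧ R z' z)

/-- Partial bisimulation preorder. -/
def PBis (U : Set E) (k' k : KLTS P E) : Prop :=
  ∃ R : k'.X → k.X → Prop, R k'.init k.init ∧ PBisRel U k' k R

/-- The sub-formula relation. -/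
inductive SubF : F P E → F P E → Prop where
  | refl (f : F P E) : SubF f f
  | andL {f g h : F P E} : SubF f g → SubF f (.and g h)
  | andR {f g h : F P E} : SubF f h → SubF f (.and g h)
  | inv {f g : F P E} : SubF f g → SubF f (.inv g)

/-- The state-relative part relation. -/
inductive PartF {X : Type} (L : X → Set P) (x : X) : F P E → F P E → Prop where
  | refl (f : F P E) : PartF L x f f
  | andL {f g h : F P E} : PartF L x f g → PartF L x f (.and g h)
  | andR {f g h : F P E} : PartF L x f h → PartF L x f (.and g h)
  | or {b : BF P} {f g : F P E} : ¬ BSat (L x) b → PartF L x f g → PartF L x f (.or b g)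
  | inv {f g : F P E} : PartF L x f g → PartF L x f (.inv g)

/-- The starting point of synthesis: transition relation over state-formula pairs. -/
inductive Step0 (k : KLTS P E) : k.X × F P E → E → k.X × F P E → Prop where
  | base {x x' : k.X} {e : E} {b : BF P} :
      k.T x e x' → Step0 k (x, .base b) e (x', .base .tt)
  | and_sub {x x' : k.X} {e : E} {f g f' g' : F P E} :
      Step0 k (x, f) e (x', f') → Step0 k (x, g) e (x', g') → SubF g' f' →
      Step0 k (x, .and f g) e (x', f')
  | and_nsub {x x' : k.X} {e : E} {f g f' g' : F P E} :
      Step0 k (x, f) e (x', f') → Step0 k (x, g) e (x', g') → ¬ SubF g' f' →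
      Step0 k (x, .and f g) e (x', .and f' g')
  | or_true {x x' : k.X} {e : E} {b : BF P} {f : F P E} :
      k.T x e x' → BSat (k.L x) b → Step0 k (x, .or b f) e (x', .base .tt)
  | or_step {x x' : k.X} {e : E} {b : BF P} {f f' : F P E} :
      Step0 k (x, f) e (x', f') → Step0 k (x, .or b f) e (x', f')
  | box_same {x x' : k.X} {e : E} {f : F P E} :
      k.T x e x' → Step0 k (x, .box e f) e (x', f)
  | box_other {x x' : k.X} {e e' : E} {f : F P E} :
      k.T x e x' → e ≠ e' → Step0 k (x, .box e' f) e (x', .base .tt)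
  | dia_same {x x' : k.X} {e : E} {f : F P E} :
      k.T x e x' → Step0 k (x, .dia e f) e (x', f)
  | dia_other {x x' : k.X} {e e' : E} {f : F P E} :
      k.T x e x' → Step0 k (x, .dia e' f) e (x', .base .tt)
  | inv_sub {x x' : k.X} {e : E} {f f' : F P E} :
      Step0 k (x, f) e (x', f') → SubF f' (.inv f) →
      Step0 k (x, .inv f) e (x', .inv f)
  | inv_nsub {x x' : k.X} {e : E} {f f' : F P E} :
      Step0 k (x, f) e (x', f') → ¬ SubF f' (.inv f) →
      Step0 k (x, .inv f) e (x', .and (.inv f) f')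
  | reach_true {x x' : k.X} {e : E} {b : BF P} :
      k.T x e x' → Step0 k (x, .reach b) e (x', .base .tt)
  | reach_self {x x' : k.X} {e : E} {b : BF P} :
      k.T x e x' → Step0 k (x, .reach b) e (x', .reach b)
  | dlf {x x' : k.X} {e : E} :
      k.T x e x' → Step0 k (x, .dlf) e (x', .base .tt)

/-- Synthesizability of a formula at a state-formula pair, w.r.t. a relation Tn. -/
inductive Syn (k : KLTS P E) (Tn : k.X × F P E → E → k.X × F P E → Prop) :
    k.X × F P E → F P E → Prop where
  | base {x : k.X} {g : F P E} {b : BF P} :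
      BSat (k.L x) b → Syn k Tn (x, g) (.base b)
  | and {p : k.X × F P E} {f1 f2 : F P E} :
      Syn k Tn p f1 → Syn k Tn p f2 → Syn k Tn p (.and f1 f2)
  | orl {x : k.X} {g : F P E} {b : BF P} {f : F P E} :
      BSat (k.L x) b → Syn k Tn (x, g) (.or b f)
  | orr {p : k.X × F P E} {b : BF P} {f : F P E} :
      Syn k Tn p f → Syn k Tn p (.or b f)
  | box {p : k.X × F P E} {e : E} {f : F P E} : Syn k Tn p (.box e f)
  | dia {x x' : k.X} {g g' : F P E} {e : E} {f : F P E} :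
      Syn k Tn (x', g') f → Tn (x, g) e (x', g') → PartF k.L x' f g' →
      Syn k Tn (x, g) (.dia e f)
  | inv {p : k.X × F P E} {f : F P E} :
      Syn k Tn p f → Syn k Tn p (.inv f)
  | reach {x x' : k.X} {g g' : F P E} {b : BF P} :
      Relation.ReflTransGen (fun a c => ∃ e, Tn a e c) (x, g) (x', g') →
      BSat (k.L x') b → Syn k Tn (x, g) (.reach b)
  | dlf {p p' : k.X × F P E} {e : E} :
      Tn p e p' → Syn k Tn p .dlf

/-- The n-th iterate of the synthesis construction. -/
def StepN (k : KLTS P E) (U : Set E) :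
    ℕ → (k.X × F P E → E → k.X × F P E → Prop)
  | 0 => Step0 k
  | n + 1 => fun p e p' =>
      StepN k U n p e p' ∧ (e ∈ U ∨ Syn k (StepN k U n) p p.2)

/-- The synthesized system model S^n_{k,f}. -/
def Synth (k : KLTS P E) (U : Set E) (f : F P E) (n : ℕ) : KLTS P E :=
  ⟨k.X × F P E, fun p => k.L p.1, StepN k U n, (k.init, f)⟩

/-- Completeness: synthesizability holds at every reachable state-formula pair. -/
def Complete (k : KLTS P E) (U : Set E) (n : ℕ) (f : F P E) : Prop :=
  ∀ p' : k.X × F P E,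
    Relation.ReflTransGen (fun a c => ∃ e, StepN k U n a e c) (k.init, f) p' →
    Syn k (StepN k U n) p' p'.2
lemma step0_proj {P E : Type} {k : KLTS P E} {p p' : k.X × F P E} {e : E}
    (h : Step0 k p e p') : k.T p.1 e p'.1 := by
  induction h <;> assumption

lemma stepN_proj {P E : Type} {k : KLTS P E} {U : Set E} {n : ℕ}
    {p p' : k.X × F P E} {e : E}
    (h : StepN k U n p e p') : k.T p.1 e p'.1 := by
  induction n with
  | zero => exact step0_proj h
  | succ n ih => exact ih h.1

lemma step0_total {P E : Type} {k : KLTS P E} {y z : k.X} {e : E}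
    (ht : k.T y e z) : ∀ g : F P E, ∃ g', Step0 k (y, g) e (z, g') := by
  intro g
  induction g with
  | base b => exact ⟨_, .base ht⟩
  | and f g ihf ihg =>
    obtain ⟨f', hf⟩ := ihf
    obtain ⟨g', hg⟩ := ihg
    by_cases h : SubF g' f'
    · exact ⟨f', .and_sub hf hg h⟩
    · exact ⟨_, .and_nsub hf hg h⟩
  | or b f ih =>
    obtain ⟨f', hf⟩ := ih
    exact ⟨f', .or_step hf⟩
  | box e' f ih =>
    by_cases h : e = e'
    · subst h; exact ⟨f, .box_same ht⟩
    · exact ⟨_, .box_other ht h⟩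
  | dia e' f ih => exact ⟨_, .dia_other ht⟩
  | inv f ih =>
    obtain ⟨f', hf⟩ := ih
    by_cases h : SubF f' (.inv f)
    · exact ⟨_, .inv_sub hf h⟩
    · exact ⟨_, .inv_nsub hf h⟩
  | reach b => exact ⟨_, .reach_true ht⟩
  | dlf => exact ⟨_, .dlf ht⟩

lemma stepN_total {P E : Type} {k : KLTS P E} {U : Set E} {n : ℕ}
    {y z : k.X} {e : E} (hU : e ∈ U) (ht : k.T y e z) (g : F P E) :
    ∃ g', StepN k U n (y, g) e (z, g') := by
  induction n with
  | zero => exact step0_total ht g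
  | succ n ih =>
    obtain ⟨g', hg⟩ := ih
    exact ⟨g', hg, Or.inl hU⟩

/-- Controllability of the synthesis result (Theorem pbis). -/
theorem synthesis_controllable {P E : Type} (k : KLTS P E) (U : Set E)
    (n : ℕ) (f : F P E) (hc : Complete k U n f) :
    PBis U (Synth k U f n) k := by
  refine ⟨fun p y => p.1 = y, rfl, ?_⟩
  rintro p y rfl
  refine ⟨rfl, ?_, ?_⟩
  · intro e z' hz'
    exact ⟨z'.1, stepN_proj hz', rfl⟩
  · intro e z hU ht
    obtain ⟨g', hg⟩ := stepN_total (k := k) (n := n) hU ht p.2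
    exact ⟨(z, g'), hg, rfl⟩
end

section
/- Synthesizability at states simulating a valid model (Lemma part_val_syn): if k' ≼ k, f ∈ part(x, g), and k' ⊨ g, then (x,g) ↑ f with respect to →_n, for every n ∈ ℕ. -/
variable {P E : Type}

section AuxPVS

variable {P E : Type}

@[reducible] def KAt (k : KLTS P E) (x : k.X) : KLTS P E := ⟨k.X, k.L, k.T, x⟩

lemma partF_trans {X : Type} {L : X → Set P} {x : X} {f g h : F P E}
    (h1 : PartF L x f g) (h2 : PartF L x g h) : PartF L x f h := by
  revert h1
  induction h2 with
  | refl => exact fun h1 => h1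
  | andL _ ih => exact fun h1 => .andL (ih h1)
  | andR _ ih => exact fun h1 => .andR (ih h1)
  | or hb _ ih => exact fun h1 => .or hb (ih h1)
  | inv _ ih => exact fun h1 => .inv (ih h1)

lemma subf_part {X : Type} {L : X → Set P} {x : X} {f g : F P E}
    (h : SubF f g) : PartF L x f g := by
  induction h with
  | refl => exact .refl _
  | andL _ ih => exact .andL ih
  | andR _ ih => exact .andR ih
  | inv _ ih => exact .inv ih

lemma fsat_inv_self {k : KLTS P E} {g : F P E} (h : FSat k (.inv g)) : FSat k g :=
  h k.init Relation.ReflTransGen.refl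

lemma fsat_inv_step {k : KLTS P E} {x y : k.X} {e : E} {g : F P E}
    (ht : k.T x e y) (h : FSat (KAt k x) (.inv g)) : FSat (KAt k y) (.inv g) :=
  fun z hz => h z (Relation.ReflTransGen.head ⟨e, ht⟩ hz)

lemma part_fsat {k k' : KLTS P E} {x : k.X} {x' : k'.X}
    (hL : k'.L x' = k.L x) {f g : F P E}
    (hp : PartF k.L x f g) (hv : FSat (KAt k' x') g) : FSat (KAt k' x') f := by
  induction hp with
  | refl => exact hv
  | andL _ ih => exact ih hv.1
  | andR _ ih => exact ih hv.2
  | or hb _ ih =>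
      refine ih (Or.resolve_left hv ?_)
      intro hb'
      have hb2 : BSat (k'.L x') _ := hb'
      exact hb (hL ▸ hb2)
  | inv _ ih => exact ih (fsat_inv_self hv)

lemma step_ex {k' k : KLTS P E} {R : k'.X → k.X → Prop}
    (hR : SimRel k' k R) (g : F P E) {x' y' : k'.X} {x y : k.X} {e : E}
    (hx : R x' x) (hy : R y' y) (hxy : k.T x e y) (ht : k'.T x' e y')
    (hv : FSat (KAt k' x') g) :
    ∃ g', Step0 k (x, g) e (y, g') ∧ FSat (KAt k' y') g' := by
  induction g with
  | base b => exact ⟨.base .tt, .base hxy, trivial⟩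
  | and g1 g2 ih1 ih2 =>
      obtain ⟨g1', s1, v1⟩ := ih1 hv.1
      obtain ⟨g2', s2, v2⟩ := ih2 hv.2
      by_cases hs : SubF g2' g1'
      · exact ⟨g1', .and_sub s1 s2 hs, v1⟩
      · exact ⟨.and g1' g2', .and_nsub s1 s2 hs, v1, v2⟩
  | or b g2 ih2 =>
      by_cases hb : BSat (k.L x) b
      · exact ⟨.base .tt, .or_true hxy hb, trivial⟩
      · have hL : k'.L x' = k.L x := (hR x' x hx).1
        have hv2 : FSat (KAt k' x') g2 := by
          refine Or.resolve_left hv ?_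
          intro hb'
          have hb2 : BSat (k'.L x') _ := hb'
          exact hb (hL ▸ hb2)
        obtain ⟨g2', s2, v2⟩ := ih2 hv2
        exact ⟨g2', .or_step s2, v2⟩
  | box e0 g1 _ =>
      by_cases he : e = e0
      · subst he
        exact ⟨g1, .box_same hxy, hv y' ht⟩
      · exact ⟨.base .tt, .box_other hxy he, trivial⟩
  | dia e0 g1 _ => exact ⟨.base .tt, .dia_other hxy, trivial⟩
  | inv g1 ih1 =>
      obtain ⟨g1', s1, v1⟩ := ih1 (fsat_inv_self hv)
      by_cases hs : SubF g1' (.inv g1)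
      · exact ⟨.inv g1, .inv_sub s1 hs, fsat_inv_step ht hv⟩
      · exact ⟨.and (.inv g1) g1', .inv_nsub s1 hs, fsat_inv_step ht hv, v1⟩
  | reach b => exact ⟨.base .tt, .reach_true hxy, trivial⟩
  | dlf => exact ⟨.base .tt, .dlf hxy, trivial⟩

lemma step_part {k' k : KLTS P E} {R : k'.X → k.X → Prop}
    (hR : SimRel k' k R) {x' y' : k'.X} {x y : k.X} {e : E}
    (hx : R x' x) (hy : R y' y) (hxy : k.T x e y) (ht : k'.T x' e y')
    {f0 : F P E} (hf0 : FSat (KAt k' y') f0) {g : F P E}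
    (hp : PartF k.L x (.dia e f0) g) (hv : FSat (KAt k' x') g) :
    ∃ g', Step0 k (x, g) e (y, g') ∧ FSat (KAt k' y') g' ∧ PartF k.L y f0 g' := by
  revert hv
  generalize hd : F.dia e f0 = d at hp
  induction hp with
  | refl =>
      intro hv
      subst hd
      exact ⟨f0, .dia_same hxy, hf0, .refl f0⟩
  | @andL f1 g1 g2 hp1 ih =>
      intro hv
      obtain ⟨g1', s1, v1, p1⟩ := ih hd hv.1
      obtain ⟨g2', s2, v2⟩ := step_ex hR g2 hx hy hxy ht hv.2
      by_cases hs : SubF g2' g1'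
      · exact ⟨g1', .and_sub s1 s2 hs, v1, p1⟩
      · exact ⟨.and g1' g2', .and_nsub s1 s2 hs, ⟨v1, v2⟩, .andL p1⟩
  | @andR f1 g1 g2 hp2 ih =>
      intro hv
      obtain ⟨g2', s2, v2, p2⟩ := ih hd hv.2
      obtain ⟨g1', s1, v1⟩ := step_ex hR g1 hx hy hxy ht hv.1
      by_cases hs : SubF g2' g1'
      · exact ⟨g1', .and_sub s1 s2 hs, v1, partF_trans p2 (subf_part hs)⟩
      · exact ⟨.and g1' g2', .and_nsub s1 s2 hs, ⟨v1, v2⟩, .andR p2⟩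
  | @or b f1 g2 hb hp2 ih =>
      intro hv
      have hL : k'.L x' = k.L x := (hR x' x hx).1
      have hv2 : FSat (KAt k' x') g2 := by
        refine Or.resolve_left hv ?_
        intro hb'
        have hb2 : BSat (k'.L x') _ := hb'
        exact hb (hL ▸ hb2)
      obtain ⟨g2', s2, v2, p2⟩ := ih hd hv2
      exact ⟨g2', .or_step s2, v2, p2⟩
  | @inv f1 g1 hp1 ih =>
      intro hv
      obtain ⟨g1', s1, v1, p1⟩ := ih hd (fsat_inv_self hv)
      by_cases hs : SubF g1' (.inv g1)
      · exact ⟨.inv g1, .inv_sub s1 hs, fsat_inv_step ht hv,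
          partF_trans p1 (subf_part hs)⟩
      · exact ⟨.and (.inv g1) g1', .inv_nsub s1 hs,
          ⟨fsat_inv_step ht hv, v1⟩, .andR p1⟩

lemma persist {k' k : KLTS P E} {U : Set E} {R : k'.X → k.X → Prop}
    (hR : SimRel k' k R) (n : ℕ)
    (hsyn : ∀ m : ℕ, m < n → ∀ (x' : k'.X) (x : k.X) (g : F P E), R x' x →
       FSat (KAt k' x') g → Syn k (StepN k U m) (x, g) g)
    {x' : k'.X} {x : k.X} {g : F P E} {e : E} {p' : k.X × F P E}
    (hx : R x' x) (hv : FSat (KAt k' x') g)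
    (hs : Step0 k (x, g) e p') : StepN k U n (x, g) e p' := by
  induction n with
  | zero => exact hs
  | succ n ih =>
      refine ⟨ih (fun m hm => hsyn m (hm.trans (Nat.lt_succ_self n))), Or.inr ?_⟩
      exact hsyn n (Nat.lt_succ_self n) x' x g hx hv

lemma path_lift {k' k : KLTS P E} {U : Set E} {R : k'.X → k.X → Prop}
    (hR : SimRel k' k R) (n : ℕ)
    (hsyn : ∀ m : ℕ, m < n → ∀ (x' : k'.X) (x : k.X) (g : F P E), R x' x →
       FSat (KAt k' x') g → Syn k (StepN k U m) (x, g) g)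
    {x' z' : k'.X}
    (hstar : Relation.ReflTransGen (fun a b => ∃ e, k'.T a e b) x' z') :
    ∀ {x : k.X} {g : F P E}, R x' x → FSat (KAt k' x') g →
      ∃ (z : k.X) (g' : F P E),
        Relation.ReflTransGen (fun a c => ∃ e, StepN k U n a e c) (x, g) (z, g') ∧
        R z' z ∧ FSat (KAt k' z') g' := by
  induction hstar using Relation.ReflTransGen.head_induction_on with
  | refl => exact fun {x g} hx hv => ⟨x, g, .refl, hx, hv⟩
  | head hstep _ ih =>
      intro x g hx hv
      obtain ⟨e, ht⟩ := hstep
      obtain ⟨y, hxy, hy⟩ := (hR _ _ hx).2 e _ ht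
      obtain ⟨g', s1, v1⟩ := step_ex hR g hx hy hxy ht hv
      obtain ⟨z, g'', hpath, hz, vz⟩ := ih hy v1
      exact ⟨z, g'', .head ⟨e, persist hR n hsyn hx hv s1⟩ hpath, hz, vz⟩

lemma main_f {k' k : KLTS P E} {U : Set E} {R : k'.X → k.X → Prop}
    (hR : SimRel k' k R) (n : ℕ)
    (hsyn : ∀ m : ℕ, m < n → ∀ (x' : k'.X) (x : k.X) (g : F P E), R x' x →
       FSat (KAt k' x') g → Syn k (StepN k U m) (x, g) g)
    (f : F P E) :
    ∀ (x' : k'.X) (x : k.X) (g : F P E), R x' x →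
      FSat (KAt k' x') g → PartF k.L x f g → Syn k (StepN k U n) (x, g) f := by
  induction f with
  | base b =>
      intro x' x g hx hv hp
      have hL : k'.L x' = k.L x := (hR x' x hx).1
      have hb : BSat (k'.L x') b := part_fsat hL hp hv
      exact Syn.base (hL ▸ hb)
  | and f1 f2 ih1 ih2 =>
      intro x' x g hx hv hp
      exact Syn.and
        (ih1 x' x g hx hv (partF_trans (.andL (.refl f1)) hp))
        (ih2 x' x g hx hv (partF_trans (.andR (.refl f2)) hp))
  | or b f1 ih1 =>
      intro x' x g hx hv hp
      by_cases hb : BSat (k.L x) b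
      · exact Syn.orl hb
      · have hL : k'.L x' = k.L x := (hR x' x hx).1
        have hvf : FSat (KAt k' x') (.or b f1) := part_fsat hL hp hv
        have hv1 : FSat (KAt k' x') f1 := by
          refine Or.resolve_left hvf ?_
          intro hb'
          have hb2 : BSat (k'.L x') _ := hb'
          exact hb (hL ▸ hb2)
        exact Syn.orr (ih1 x' x g hx hv (partF_trans (.or hb (.refl f1)) hp))
  | box e f1 _ => exact fun _ _ _ _ _ _ => Syn.box
  | dia e f1 ih1 =>
      intro x' x g hx hv hp
      have hL : k'.L x' = k.L x := (hR x' x hx).1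
      have hvf : FSat (KAt k' x') (.dia e f1) := part_fsat hL hp hv
      obtain ⟨y', ht, hv1⟩ := hvf
      obtain ⟨y, hxy, hy⟩ := (hR _ _ hx).2 e _ ht
      obtain ⟨g', s, vg', pg'⟩ := step_part hR hx hy hxy ht hv1 hp hv
      exact Syn.dia (ih1 y' y g' hy vg' pg') (persist hR n hsyn hx hv s) pg'
  | inv f1 ih1 =>
      intro x' x g hx hv hp
      exact Syn.inv (ih1 x' x g hx hv (partF_trans (.inv (.refl f1)) hp))
  | reach b =>
      intro x' x g hx hv hp
      have hL : k'.L x' = k.L x := (hR x' x hx).1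
      have hvf : FSat (KAt k' x') (.reach b) := part_fsat hL hp hv
      obtain ⟨z', hstar, hbz⟩ := hvf
      obtain ⟨z, g'', hpath, hz, _⟩ := path_lift hR n hsyn hstar hx hv
      have hLz : k'.L z' = k.L z := (hR _ _ hz).1
      exact Syn.reach hpath (hLz ▸ hbz)
  | dlf =>
      intro x' x g hx hv hp
      have hL : k'.L x' = k.L x := (hR x' x hx).1
      have hvf : FSat (KAt k' x') .dlf := part_fsat hL hp hv
      obtain ⟨e, y', ht⟩ := hvf
      obtain ⟨y, hxy, hy⟩ := (hR _ _ hx).2 e _ ht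
      obtain ⟨g', s, _⟩ := step_ex hR g hx hy hxy ht hv
      exact Syn.dlf (persist hR n hsyn hx hv s)

lemma main_all {k' k : KLTS P E} {U : Set E} {R : k'.X → k.X → Prop}
    (hR : SimRel k' k R) (n : ℕ) :
    ∀ (x' : k'.X) (x : k.X) (g f : F P E), R x' x →
      FSat (KAt k' x') g → PartF k.L x f g → Syn k (StepN k U n) (x, g) f := by
  induction n using Nat.strong_induction_on with
  | _ n ih =>
    intro x' x g f hx hv hp
    exact main_f hR n
      (fun m hm x' x g hx hv => ih m hm x' x g g hx hv (.refl g))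
      f x' x g hx hv hp

end AuxPVS

/-- Synthesizability at states simulating a valid model (Lemma part_val_syn). -/
theorem part_val_syn {P E : Type} (k' k : KLTS P E) (U : Set E)
    (f g : F P E) (hsim : Sim k' k)
    (hp : PartF k.L k.init f g) (hv : FSat k' g) :
    ∀ n : ℕ, Syn k (StepN k U n) (k.init, g) f := by
  obtain ⟨R, hinit, hR⟩ := hsim
  intro n
  exact main_all hR n k'.init k.init g f hinit hv hp
end
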